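/- Let n ≥ k ≥ 2 be integers and let P be a set of n points in a real inner product space, with D = diam P. Then there exist a partition of P into k nonempty subsets P_1, …, P_k and a point c such that for every i ∈ {1,…,k} the closed ball of radius (2 + √2)·√(k/n)·D centered at c intersects the convex hull of P_i. -/

import Mathlib

open Finset Metric RealInnerProductSpace

section Aux
variable {E : Type*} [NormedAddCommGroup E] [InnerProductSpace ℝ E] [DecidableEq E]

/-- Any finite set of cardinality at least `k*m` can be partitioned into `k` parts
of cardinality at least `m`. -/
lemma aux_exists_partition (m : ℕ) :
    ∀ (k : ℕ), 1 ≤ k → ∀ (Q : Finset E), k * m ≤ Q.card →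
    ∃ f : Fin k → Finset E, (∀ i, m ≤ (f i).card) ∧
      (∀ i i', i ≠ i' → Disjoint (f i) (f i')) ∧
      Finset.univ.biUnion f = Q := by
  intro k
  induction k with
  | zero => intro h; omega
  | succ k ih =>
    intro _ Q hQ
    rcases Nat.eq_zero_or_pos k with hk0 | hkpos
    · subst hk0
      refine ⟨fun _ => Q, ?_, ?_, ?_⟩
      · intro i; simpa using hQ
      · intro i i' h; exact absurd (Fin.ext (by omega)) h
      · ext x; simp
    · rw [Nat.succ_mul] at hQ
      obtain ⟨s, hsQ, hs⟩ := Finset.exists_subset_card_eq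
        (show m ≤ Q.card by omega)
      obtain ⟨f, h1, h2, h3⟩ := ih hkpos (Q \ s)
        (by rw [Finset.card_sdiff_of_subset hsQ]; omega)
      have hfsub : ∀ i, f i ⊆ Q \ s := by
        intro i
        rw [← h3]
        exact Finset.subset_biUnion_of_mem f (Finset.mem_univ i)
      refine ⟨Fin.cons s f, ?_, ?_, ?_⟩
      · intro i
        refine Fin.cases ?_ ?_ i
        · simpa [hs] using le_refl m
        · intro j; simpa using h1 j
      · intro i i' hne
        rcases Fin.eq_zero_or_eq_succ i with rfl | ⟨j, rfl⟩ <;>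
          rcases Fin.eq_zero_or_eq_succ i' with rfl | ⟨j', rfl⟩
        · exact absurd rfl hne
        · simp only [Fin.cons_zero, Fin.cons_succ]
          exact Finset.disjoint_sdiff.mono_right (hfsub j')
        · simp only [Fin.cons_zero, Fin.cons_succ]
          exact (Finset.disjoint_sdiff.mono_right (hfsub j)).symm
        · simp only [Fin.cons_succ]
          exact h2 j j' (by intro h; exact hne (by rw [h]))
      · ext x
        simp only [Finset.mem_biUnion, Finset.mem_univ, true_and]
        rw [Fin.exists_fin_succ]
        simp only [Fin.cons_zero, Fin.cons_succ]
        constructor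
        · rintro (hx | ⟨j, hj⟩)
          · exact hsQ hx
          · have := hfsub j hj
            exact (Finset.mem_sdiff.1 this).1
        · intro hx
          by_cases hxs : x ∈ s
          · exact Or.inl hxs
          · have : x ∈ Q \ s := Finset.mem_sdiff.2 ⟨hx, hxs⟩
            rw [← h3] at this
            obtain ⟨j, _, hj⟩ := Finset.mem_biUnion.1 this
            exact Or.inr ⟨j, hj⟩

end Aux

set_option maxHeartbeats 2000000 in
theorem no_dimensional_tverberg
    {E : Type*} [NormedAddCommGroup E] [InnerProductSpace ℝ E] [DecidableEq E]
    (n k : ℕ) (hk : 2 ≤ k) (hkn : k ≤ n)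
    (P : Finset E) (hP : P.card = n) :
    ∃ Pparts : Fin k → Finset E,
      (∀ i, (Pparts i).Nonempty) ∧
      (∀ i i', i ≠ i' → Disjoint (Pparts i) (Pparts i')) ∧
      Finset.univ.biUnion Pparts = P ∧
      ∃ c : E, ∀ i, ∃ p ∈ convexHull ℝ (↑(Pparts i) : Set E),
        dist p c ≤ (2 + Real.sqrt 2) * Real.sqrt ((k : ℝ) / (n : ℝ))
          * Metric.diam (↑P : Set E) := by
  classical
  have hn2 : 2 ≤ n := le_trans hk hkn
  set D := Metric.diam (↑P : Set E) with hD
  have hD0 : 0 ≤ D := Metric.diam_nonneg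
  set m := n / k with hmdef
  have hm1 : 1 ≤ m := (Nat.one_le_div_iff (by omega)).2 hkn
  have hkm : k * m ≤ n := by
    rw [hmdef, mul_comm]; exact Nat.div_mul_le_self n k
  have hn2km : n ≤ 2 * k * m := by
    have h1 : n % k < k := Nat.mod_lt _ (by omega)
    have h2 : n = k * m + n % k := by
      rw [hmdef]; exact (Nat.div_add_mod n k).symm ▸ rfl
    nlinarith
  -- the set of admissible partitions
  set S : Set (Fin k → Finset E) :=
    {f | (∀ i, m ≤ (f i).card) ∧ (∀ i i', i ≠ i' → Disjoint (f i) (f i')) ∧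
      Finset.univ.biUnion f = P} with hSdef
  have hS_ne : S.Nonempty := by
    obtain ⟨f, h⟩ := aux_exists_partition m k (by omega) P (by rw [hP]; exact hkm)
    exact ⟨f, h⟩
  have hS_fin : S.Finite := by
    apply Set.Finite.subset
      (Set.Finite.pi (fun i : Fin k => (P.powerset).finite_toSet))
    intro f hf
    rw [Set.mem_pi]
    intro i _
    simp only [Finset.mem_coe, Finset.mem_powerset]
    rw [← hf.2.2]
    exact Finset.subset_biUnion_of_mem f (Finset.mem_univ i)
  -- minimize Φ
  set Φ : (Fin k → Finset E) → ℝ :=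
    fun f => ∑ i, ‖∑ x ∈ f i, x‖ ^ 2 / ((f i).card : ℝ) with hΦdef
  obtain ⟨f, hfS, hmin⟩ := Set.exists_min_image S Φ hS_fin hS_ne
  obtain ⟨hcard, hdisj, hunion⟩ := hfS
  have hmemP : ∀ i, ∀ x ∈ f i, x ∈ P := by
    intro i x hx
    rw [← hunion]
    exact Finset.mem_biUnion.2 ⟨i, Finset.mem_univ i, hx⟩
  have hdistD : ∀ {u v : E}, u ∈ P → v ∈ P → ‖v - u‖ ≤ D := by
    intro u v hu hv
    rw [← dist_eq_norm]
    exact Metric.dist_le_diam_of_mem P.finite_toSet.isBounded hv hu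
  -- centroids
  set s : Fin k → E := fun i => ∑ x ∈ f i, x with hsdef
  set ν : Fin k → ℝ := fun i => ((f i).card : ℝ) with hνdef
  have hν0 : ∀ i, 0 < ν i := by
    intro i
    have h := hcard i
    have h2 : 0 < (f i).card := by omega
    show (0:ℝ) < ((f i).card : ℝ)
    exact_mod_cast h2
  set b : Fin k → E := fun i => (ν i)⁻¹ • s i with hbdef
  have hsb : ∀ i, s i = ν i • b i := by
    intro i
    rw [hbdef]
    simp only [smul_smul, mul_inv_cancel₀ (hν0 i).ne', one_smul]
  have hmR : (1:ℝ) ≤ m := by exact_mod_cast hm1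
  -- key swap inequality
  have key : ∀ i j, i ≠ j → ∀ u ∈ f i, ∀ v ∈ f j,
      -(D ^ 2 / m) ≤ ⟪b i - b j, v - u⟫ := by
    intro i j hij u hu v hv
    have hvni : v ∉ f i := Finset.disjoint_left.1 (hdisj j i (Ne.symm hij)) hv
    have hunj : u ∉ f j := Finset.disjoint_left.1 (hdisj i j hij) hu
    have hvu : v ≠ u := fun h => hvni (h ▸ hu)
    -- the swapped partition
    set g : Fin k → Finset E := fun l =>
      if l = i then insert v ((f i).erase u)
      else if l = j then insert u ((f j).erase v) else f l with hgdef
    have hgi : g i = insert v ((f i).erase u) := by simp [hgdef]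
    have hgj : g j = insert u ((f j).erase v) := by
      simp [hgdef, Ne.symm hij]
    have hgo : ∀ l, l ≠ i → l ≠ j → g l = f l := by
      intro l h1 h2; simp [hgdef, h1, h2]
    have hvnotin : v ∉ (f i).erase u := fun h => hvni (Finset.mem_of_mem_erase h)
    have hunotin : u ∉ (f j).erase v := fun h => hunj (Finset.mem_of_mem_erase h)
    have hcardgi : (g i).card = (f i).card := by
      rw [hgi, Finset.card_insert_of_notMem hvnotin, Finset.card_erase_of_mem hu]
      have : 1 ≤ (f i).card := Finset.card_pos.2 ⟨u, hu⟩
      omega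
    have hcardgj : (g j).card = (f j).card := by
      rw [hgj, Finset.card_insert_of_notMem hunotin, Finset.card_erase_of_mem hv]
      have : 1 ≤ (f j).card := Finset.card_pos.2 ⟨v, hv⟩
      omega
    have hsumgi : ∑ x ∈ g i, x = s i - u + v := by
      rw [hgi, Finset.sum_insert hvnotin]
      have := Finset.sum_erase_add (f i) id hu
      simp only [id] at this
      have h2 : ∑ x ∈ (f i).erase u, x = s i - u := by
        rw [hsdef]; simp only; linear_combination (norm := abel) this
      rw [h2]; abel
    have hsumgj : ∑ x ∈ g j, x = s j - v + u := by
      rw [hgj, Finset.sum_insert hunotin]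
      have := Finset.sum_erase_add (f j) id hv
      simp only [id] at this
      have h2 : ∑ x ∈ (f j).erase v, x = s j - v := by
        rw [hsdef]; simp only; linear_combination (norm := abel) this
      rw [h2]; abel
    -- g is an admissible partition
    have hgS : g ∈ S := by
      refine ⟨?_, ?_, ?_⟩
      · intro l
        by_cases h1 : l = i
        · subst h1; rw [hcardgi]; exact hcard l
        by_cases h2 : l = j
        · subst h2; rw [hcardgj]; exact hcard l
        · rw [hgo l h1 h2]; exact hcard l
      · intro l l' hll'
        rw [Finset.disjoint_left]
        intro x hx hx'
        have hmem : ∀ l₀, x ∈ g l₀ →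
            (x ∈ f l₀ ∧ x ≠ u ∧ x ≠ v) ∨ (l₀ = i ∧ x = v) ∨ (l₀ = j ∧ x = u) := by
          intro l₀ hxl
          by_cases h1 : l₀ = i
          · subst h1
            rw [hgi, Finset.mem_insert] at hxl
            rcases hxl with h | h
            · exact Or.inr (Or.inl ⟨rfl, h⟩)
            · rcases Finset.mem_erase.1 h with ⟨hne, hmem⟩
              by_cases hxv : x = v
              · exact Or.inr (Or.inl ⟨rfl, hxv⟩)
              · exact Or.inl ⟨hmem, hne, hxv⟩
          by_cases h2 : l₀ = j
          · subst h2
            rw [hgj, Finset.mem_insert] at hxl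
            rcases hxl with h | h
            · exact Or.inr (Or.inr ⟨rfl, h⟩)
            · rcases Finset.mem_erase.1 h with ⟨hne, hmem⟩
              by_cases hxu : x = u
              · exact Or.inr (Or.inr ⟨rfl, hxu⟩)
              · exact Or.inl ⟨hmem, hxu, hne⟩
          · rw [hgo l₀ h1 h2] at hxl
            have hxu : x ≠ u := fun h => (Finset.disjoint_left.1 (hdisj l₀ i h1) hxl) (h ▸ hu)
            have hxv : x ≠ v := fun h => (Finset.disjoint_left.1 (hdisj l₀ j h2) hxl) (h ▸ hv)
            exact Or.inl ⟨hxl, hxu, hxv⟩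
        rcases hmem l hx with ⟨hxf, hxu, hxv⟩ | ⟨hl, hxeq⟩ | ⟨hl, hxeq⟩ <;>
          rcases hmem l' hx' with ⟨hxf', hxu', hxv'⟩ | ⟨hl', hxeq'⟩ | ⟨hl', hxeq'⟩
        · exact Finset.disjoint_left.1 (hdisj l l' hll') hxf hxf'
        · exact hxv hxeq'
        · exact hxu hxeq'
        · exact hxv' hxeq
        · exact hll' (hl.trans hl'.symm)
        · exact hvu (hxeq.symm.trans hxeq')
        · exact hxu' hxeq
        · exact hvu (hxeq'.symm.trans hxeq)
        · exact hll' (hl.trans hl'.symm)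
      · rw [← hunion]
        ext x
        simp only [Finset.mem_biUnion, Finset.mem_univ, true_and]
        constructor
        · rintro ⟨l, hl⟩
          by_cases h1 : l = i
          · rw [h1, hgi, Finset.mem_insert] at hl
            rcases hl with h | h
            · exact ⟨j, h ▸ hv⟩
            · exact ⟨i, Finset.mem_of_mem_erase h⟩
          · by_cases h2 : l = j
            · rw [h2, hgj, Finset.mem_insert] at hl
              rcases hl with h | h
              · exact ⟨i, h ▸ hu⟩
              · exact ⟨j, Finset.mem_of_mem_erase h⟩
            · exact ⟨l, (hgo l h1 h2) ▸ hl⟩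
        · rintro ⟨l, hl⟩
          by_cases h1 : l = i
          · rw [h1] at hl
            by_cases hxu : x = u
            · refine ⟨j, ?_⟩
              rw [hgj, hxu]
              exact Finset.mem_insert_self u _
            · exact ⟨i, by
                rw [hgi]
                exact Finset.mem_insert_of_mem (Finset.mem_erase.2 ⟨hxu, hl⟩)⟩
          · by_cases h2 : l = j
            · rw [h2] at hl
              by_cases hxv : x = v
              · exact ⟨i, by rw [hgi, hxv]; exact Finset.mem_insert_self v _⟩
              · exact ⟨j, by
                  rw [hgj]
                  exact Finset.mem_insert_of_mem (Finset.mem_erase.2 ⟨hxv, hl⟩)⟩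
            · exact ⟨l, (hgo l h1 h2).symm ▸ hl⟩
    -- optimality gives the inequality
    have hΦle : Φ f ≤ Φ g := hmin g hgS
    have hjmem : j ∈ Finset.univ.erase i :=
      Finset.mem_erase.2 ⟨Ne.symm hij, Finset.mem_univ j⟩
    have esum : ∀ t : Fin k → ℝ, ∑ l, t l
        = t i + (t j + ∑ l ∈ (Finset.univ.erase i).erase j, t l) := by
      intro t
      rw [← Finset.add_sum_erase _ t (Finset.mem_univ i),
        ← Finset.add_sum_erase _ t hjmem]
    have htail : ∑ l ∈ (Finset.univ.erase i).erase j, ‖∑ x ∈ g l, x‖ ^ 2 / ((g l).card : ℝ)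
        = ∑ l ∈ (Finset.univ.erase i).erase j, ‖∑ x ∈ f l, x‖ ^ 2 / ((f l).card : ℝ) := by
      refine Finset.sum_congr rfl ?_
      intro l hl
      have h2 : l ≠ j := (Finset.mem_erase.1 hl).1
      have h1 : l ≠ i := (Finset.mem_erase.1 (Finset.mem_erase.1 hl).2).1
      rw [hgo l h1 h2]
    have hdiff : (0:ℝ) ≤ (‖s i - u + v‖ ^ 2 - ‖s i‖ ^ 2) / ν i
        + (‖s j - v + u‖ ^ 2 - ‖s j‖ ^ 2) / ν j := by
      have e1 : Φ f = ‖s i‖ ^ 2 / ν i + (‖s j‖ ^ 2 / ν j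
          + ∑ l ∈ (Finset.univ.erase i).erase j, ‖∑ x ∈ f l, x‖ ^ 2 / ((f l).card : ℝ)) := by
        simp only [hΦdef]
        exact esum _
      have e2 : Φ g = ‖s i - u + v‖ ^ 2 / ν i + (‖s j - v + u‖ ^ 2 / ν j
          + ∑ l ∈ (Finset.univ.erase i).erase j, ‖∑ x ∈ f l, x‖ ^ 2 / ((f l).card : ℝ)) := by
        simp only [hΦdef]
        rw [esum (fun l => ‖∑ x ∈ g l, x‖ ^ 2 / ((g l).card : ℝ))]
        rw [htail, hsumgi, hsumgj, hcardgi, hcardgj]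
      rw [e1, e2] at hΦle
      rw [sub_div, sub_div]
      linarith
    -- expand the norms
    have hnormD : ‖v - u‖ ≤ D := hdistD (hmemP i u hu) (hmemP j v hv)
    have hexp1 : ‖s i - u + v‖ ^ 2 - ‖s i‖ ^ 2 = 2 * (ν i * ⟪b i, v - u⟫) + ‖v - u‖ ^ 2 := by
      have h0 : s i - u + v = s i + (v - u) := by abel
      rw [h0, norm_add_sq_real, hsb i, real_inner_smul_left]
      ring
    have hexp2 : ‖s j - v + u‖ ^ 2 - ‖s j‖ ^ 2
        = -(2 * (ν j * ⟪b j, v - u⟫)) + ‖v - u‖ ^ 2 := by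
      have h0 : s j - v + u = s j + (u - v) := by abel
      have h1 : u - v = -(v - u) := by abel
      rw [h0, norm_add_sq_real, hsb j, real_inner_smul_left, h1, inner_neg_right,
        norm_neg]
      ring
    rw [hexp1, hexp2] at hdiff
    have hνi := hν0 i
    have hνj := hν0 j
    have hmpos : (0:ℝ) < (m:ℝ) := lt_of_lt_of_le zero_lt_one hmR
    have hνmi : (m:ℝ) ≤ ν i := by simp only [hνdef]; exact_mod_cast hcard i
    have hνmj : (m:ℝ) ≤ ν j := by simp only [hνdef]; exact_mod_cast hcard j
    have hdiff2 : (0:ℝ) ≤ 2 * ⟪b i, v - u⟫ - 2 * ⟪b j, v - u⟫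
        + ‖v - u‖ ^ 2 * ((ν i)⁻¹ + (ν j)⁻¹) := by
      have e : (2 * (ν i * ⟪b i, v - u⟫) + ‖v - u‖ ^ 2) / ν i
          + (-(2 * (ν j * ⟪b j, v - u⟫)) + ‖v - u‖ ^ 2) / ν j
          = 2 * ⟪b i, v - u⟫ - 2 * ⟪b j, v - u⟫
            + ‖v - u‖ ^ 2 * ((ν i)⁻¹ + (ν j)⁻¹) := by
        field_simp
        ring
      rw [e] at hdiff
      exact hdiff
    rw [inner_sub_left]
    have hb1 : ‖v - u‖ ^ 2 ≤ D ^ 2 := by nlinarith [norm_nonneg (v - u)]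
    have hii : (ν i)⁻¹ ≤ ((m:ℝ))⁻¹ := inv_anti₀ hmpos hνmi
    have hjj : (ν j)⁻¹ ≤ ((m:ℝ))⁻¹ := inv_anti₀ hmpos hνmj
    have hb2 : (ν i)⁻¹ + (ν j)⁻¹ ≤ 2 / (m:ℝ) := by
      have : 2 / (m:ℝ) = (m:ℝ)⁻¹ + (m:ℝ)⁻¹ := by ring
      linarith
    have hb3 : ‖v - u‖ ^ 2 * ((ν i)⁻¹ + (ν j)⁻¹) ≤ D ^ 2 * (2 / (m:ℝ)) := by
      refine mul_le_mul hb1 hb2 ?_ (sq_nonneg D)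
      have h1 : (0:ℝ) ≤ (ν i)⁻¹ := le_of_lt (inv_pos.2 hνi)
      have h2 : (0:ℝ) ≤ (ν j)⁻¹ := le_of_lt (inv_pos.2 hνj)
      linarith
    have he : D ^ 2 * (2 / (m:ℝ)) = 2 * (D ^ 2 / (m:ℝ)) := by ring
    linarith
  -- all part centroids are pairwise close
  have hmpos : (0:ℝ) < (m:ℝ) := lt_of_lt_of_le zero_lt_one hmR
  have hbij : ∀ i j : Fin k, ‖b i - b j‖ ^ 2 ≤ D ^ 2 / (m:ℝ) := by
    intro i j
    by_cases hij : i = j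
    · subst hij
      simp only [sub_self, norm_zero]
      norm_num
      positivity
    · have hkey := key i j hij
      set w : E := b i - b j with hw
      have hsum1 : ∀ u ∈ f i, (ν j) * (-(D ^ 2 / (m:ℝ))) ≤ ∑ v ∈ f j, ⟪w, v - u⟫ := by
        intro u hu
        calc (ν j) * (-(D ^ 2 / (m:ℝ))) = ∑ _v ∈ f j, (-(D ^ 2 / (m:ℝ))) := by
              rw [Finset.sum_const, nsmul_eq_mul]
          _ ≤ ∑ v ∈ f j, ⟪w, v - u⟫ := Finset.sum_le_sum (fun v hv => hkey u hu v hv)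
      have hsum2 : (ν i) * ((ν j) * (-(D ^ 2 / (m:ℝ))))
          ≤ ∑ u ∈ f i, ∑ v ∈ f j, ⟪w, v - u⟫ := by
        calc (ν i) * ((ν j) * (-(D ^ 2 / (m:ℝ))))
            = ∑ _u ∈ f i, (ν j) * (-(D ^ 2 / (m:ℝ))) := by
              rw [Finset.sum_const, nsmul_eq_mul]
          _ ≤ _ := Finset.sum_le_sum hsum1
      have hcompute : ∑ u ∈ f i, ∑ v ∈ f j, ⟪w, v - u⟫
          = (ν i) * (ν j) * (-(‖w‖ ^ 2)) := by
        have hinner : ∀ u : E, ∑ v ∈ f j, ⟪w, v - u⟫ = ν j * ⟪w, b j⟫ - ν j * ⟪w, u⟫ := by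
          intro u
          have h0 : ∀ v : E, ⟪w, v - u⟫ = ⟪w, v⟫ - ⟪w, u⟫ := fun v => inner_sub_right _ _ _
          simp_rw [h0]
          rw [Finset.sum_sub_distrib, Finset.sum_const, nsmul_eq_mul, ← inner_sum]
          rw [show (∑ v ∈ f j, v) = s j from rfl, hsb j, real_inner_smul_right]
        have houter : ∑ u ∈ f i, (ν j * ⟪w, b j⟫ - ν j * ⟪w, u⟫)
            = ν i * (ν j * ⟪w, b j⟫) - ν j * (ν i * ⟪w, b i⟫) := by
          rw [Finset.sum_sub_distrib, Finset.sum_const, nsmul_eq_mul, ← Finset.mul_sum]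
          have hsi : ∑ u ∈ f i, ⟪w, u⟫ = ν i * ⟪w, b i⟫ := by
            rw [← inner_sum, show (∑ u ∈ f i, u) = s i from rfl, hsb i,
              real_inner_smul_right]
          rw [hsi, show ((#(f i) : ℝ)) = ν i from rfl]
        have hbji : ⟪w, b j⟫ - ⟪w, b i⟫ = -(‖w‖ ^ 2) := by
          rw [← inner_sub_right, show b j - b i = -w by rw [hw]; abel, inner_neg_right,
            real_inner_self_eq_norm_sq]
        simp_rw [hinner]
        rw [houter]
        linear_combination (ν i * ν j) * hbji
      rw [hcompute] at hsum2
      nlinarith [mul_pos (hν0 i) (hν0 j), hsum2]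
  -- assemble the conclusion
  have hnpos : (0:ℝ) < (n:ℝ) := by
    have : 0 < n := by omega
    exact_mod_cast this
  have hne : ∀ i, (f i).Nonempty := by
    intro i
    apply Finset.card_pos.1
    have := hcard i
    omega
  refine ⟨f, hne, hdisj, hunion, ⟨b ⟨0, by omega⟩, ?_⟩⟩
  intro i
  refine ⟨b i, ?_, ?_⟩
  · have hws : (0:ℝ) < ∑ _x ∈ f i, (1:ℝ) := by
      rw [Finset.sum_const, nsmul_eq_mul, mul_one]
      exact_mod_cast Finset.card_pos.2 (hne i)
    have hmem := Finset.centerMass_id_mem_convexHull (f i)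
      (w := fun _ => (1:ℝ)) (fun _ _ => zero_le_one) hws
    have hcm : (f i).centerMass (fun _ => (1:ℝ)) id = b i := by
      rw [Finset.centerMass]
      simp only [one_smul, Finset.sum_const, nsmul_eq_mul, mul_one, id_eq]
      rfl
    rw [hcm] at hmem
    exact hmem
  · rw [dist_eq_norm]
    have h2 := hbij i ⟨0, by omega⟩
    have hs2 : Real.sqrt 2 ^ 2 = 2 := Real.sq_sqrt (by norm_num)
    have hs2' : (0:ℝ) ≤ Real.sqrt 2 := Real.sqrt_nonneg 2
    have hkn' : (0:ℝ) ≤ (k:ℝ) / (n:ℝ) := by positivity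
    have hsq : Real.sqrt ((k:ℝ) / (n:ℝ)) ^ 2 = (k:ℝ) / (n:ℝ) := Real.sq_sqrt hkn'
    set R := (2 + Real.sqrt 2) * Real.sqrt ((k:ℝ) / (n:ℝ)) * D with hR
    have hR0 : 0 ≤ R := by
      rw [hR]
      refine mul_nonneg (mul_nonneg (by linarith) (Real.sqrt_nonneg _)) hD0
    have hdm : D ^ 2 / (m:ℝ) ≤ R ^ 2 := by
      have h1m : 1 / (m:ℝ) ≤ (2 * (k:ℝ)) / (n:ℝ) := by
        rw [div_le_div_iff₀ hmpos hnpos]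
        have hc : (n:ℝ) ≤ 2 * (k:ℝ) * (m:ℝ) := by exact_mod_cast hn2km
        linarith
      have hRsq : R ^ 2 = (2 + Real.sqrt 2) ^ 2 * ((k:ℝ) / (n:ℝ)) * D ^ 2 := by
        rw [hR, mul_pow, mul_pow, hsq]
      rw [hRsq]
      have hD2 : (0:ℝ) ≤ D ^ 2 := sq_nonneg D
      have e1 : D ^ 2 / (m:ℝ) = D ^ 2 * (1 / (m:ℝ)) := by ring
      rw [e1]
      have hexp : (2 + Real.sqrt 2) ^ 2 = 6 + 4 * Real.sqrt 2 := by
        linear_combination hs2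
      rw [hexp]
      set q : ℝ := (k:ℝ) / (n:ℝ) with hqdef
      set μ : ℝ := 1 / (m:ℝ) with hμdef
      have hq0 : 0 ≤ q := hkn'
      have h1m' : μ ≤ 2 * q := by
        rw [hμdef, hqdef]
        calc 1 / (m:ℝ) ≤ 2 * (k:ℝ) / (n:ℝ) := h1m
          _ = 2 * ((k:ℝ) / (n:ℝ)) := by ring
      nlinarith [mul_le_mul_of_nonneg_left h1m' hD2, mul_nonneg hq0 hD2,
        mul_nonneg hs2' (mul_nonneg hq0 hD2)]
    calc ‖b i - b ⟨0, by omega⟩‖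
        = Real.sqrt (‖b i - b ⟨0, by omega⟩‖ ^ 2) := (Real.sqrt_sq (norm_nonneg _)).symm
      _ ≤ Real.sqrt (R ^ 2) := Real.sqrt_le_sqrt (le_trans h2 hdm)
      _ = R := Real.sqrt_sq hR0
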